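/- Let X be a topological space equipped with a partial order such that every open subset of X is an upper set, and suppose X has discrete type: two points p, q ∈ X are joined by a path in X if and only if they are related by the equivalence relation generated by the comparability relation 'a ≤ b or b ≤ a'. Suppose there exists a homotopy equivalence between X and a topological space K which is T1 and locally path-connected. Then every path component of X is contractible as a subspace of X, and the space of path components of X (the quotient of X by the joined-by-a-path relation, with the quotient topology) is discrete. -/

import Mathlib

private theorem joined_map_aux {A B : Type*} [TopologicalSpace A] [TopologicalSpace B]
    (φ : C(A, B)) {a b : A} (h : Joined a b) : Joined (φ a) (φ b) :=
  ⟨h.somePath.map φ.continuous⟩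

/-- The forward direction of Theorem 8.3 of the paper: if `X` carries an Up-type
topology (open sets are upper sets), has discrete type (points are joined by a path iff
they are equivalent under the equivalence relation generated by comparability), and is
homotopy equivalent to a T1 locally path-connected space, then every path component of
`X` is contractible and the space of path components of `X` is discrete. -/
theorem stmt_11 {X K : Type*} [TopologicalSpace X] [PartialOrder X]
    (hup : ∀ U : Set X, IsOpen U → IsUpperSet U)
    (hdt : ∀ p q : X,
      Joined p q ↔ Relation.EqvGen (fun a b => a ≤ b ∨ b ≤ a) p q)
    [TopologicalSpace K] [T1Space K] [LocallyPathConnectedSpace K]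
    (h : Nonempty (ContinuousMap.HomotopyEquiv X K)) :
    (∀ x : X, ContractibleSpace (pathComponent x)) ∧
    @DiscreteTopology (ZerothHomotopy X)
      (@instTopologicalSpaceQuotient X (pathSetoid X) _) := by
  obtain ⟨e⟩ := h
  set f : C(X, K) := e.toFun with hf
  set g : C(K, X) := e.invFun with hg
  obtain ⟨H⟩ := e.left_inv
  -- f is constant under ≤
  have key : ∀ a b : X, a ≤ b → f a = f b := by
    intro a b hab
    have h1 : f a ∈ closure ({f b} : Set K) := by
      rw [mem_closure_iff]
      intro V hV haV
      exact ⟨f b, hup _ (hV.preimage f.continuous) hab haV, rfl⟩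
    simpa [closure_singleton] using h1
  -- f is constant on path components
  have key2' : ∀ p q : X, Relation.EqvGen (fun a b => a ≤ b ∨ b ≤ a) p q → f p = f q := by
    intro p q hpq
    induction hpq with
    | rel a b hab => exact hab.elim (key a b) (fun h => (key b a h).symm)
    | refl a => rfl
    | symm a b _ ih => exact ih.symm
    | trans a b c _ _ ih1 ih2 => exact ih1.trans ih2
  have key2 : ∀ p q : X, Joined p q → f p = f q := fun p q hpq =>
    key2' p q ((hdt p q).mp hpq)
  have jgf : ∀ x : X, Joined (g (f x)) x := fun x => ⟨H.evalAt x⟩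
  have jback : ∀ x y : X, Joined (f x) (f y) → Joined x y := by
    intro x y hxy
    exact ((jgf x).symm.trans (joined_map_aux g hxy)).trans (jgf y)
  -- every point along the homotopy stays joined to the original point
  have memH : ∀ (t : unitInterval) (y : X), Joined y (H (t, y)) := by
    intro t y
    have j0 : Joined (H (0, y)) (H (t, y)) := by
      refine ⟨⟨⟨fun s => H (⟨s.1 * t.1, unitInterval.mul_mem s.2 t.2⟩, y), ?_⟩, ?_, ?_⟩⟩
      · exact H.continuous.comp
          ((Continuous.subtype_mk (continuous_subtype_val.mul continuous_const) _).prodMk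
            continuous_const)
      · exact congrArg (fun s => H (s, y)) (Subtype.ext (zero_mul _))
      · exact congrArg (fun s => H (s, y)) (Subtype.ext (one_mul _))
    have h0 : H (0, y) = g (f y) := H.apply_zero y
    exact (h0 ▸ jgf y).symm.trans j0
  constructor
  · -- contractibility of each path component
    intro x
    have hcx : g (f x) ∈ pathComponent x := (jgf x).symm
    rw [contractible_iff_id_nullhomotopic]
    refine ⟨⟨g (f x), hcx⟩, ?_⟩
    have hmem : ∀ (p : unitInterval × pathComponent x),
        H (unitInterval.symm p.1, (p.2 : X)) ∈ pathComponent x :=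
      fun p => Joined.trans p.2.2 (memH _ _)
    refine ⟨⟨⟨fun p => ⟨H (unitInterval.symm p.1, (p.2 : X)), hmem p⟩, ?_⟩, ?_, ?_⟩⟩
    · refine Continuous.subtype_mk ?_ _
      exact H.continuous.comp ((unitInterval.continuous_symm.comp continuous_fst).prodMk
        (continuous_subtype_val.comp continuous_snd))
    · intro y
      apply Subtype.ext
      show H (unitInterval.symm 0, (y : X)) = (y : X)
      rw [unitInterval.symm_zero]
      exact H.apply_one (y : X)
    · intro y
      apply Subtype.ext
      show H (unitInterval.symm 1, (y : X)) = g (f x)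
      rw [unitInterval.symm_one]
      have h0 : H (0, (y : X)) = g (f (y : X)) := H.apply_zero (y : X)
      rw [h0, key2 _ _ (Joined.symm y.2)]
  · -- discreteness of the space of path components
    have hopen : ∀ x : X, IsOpen (pathComponent x) := by
      intro x
      have heq : pathComponent x = f ⁻¹' (pathComponent (f x)) := by
        ext y
        constructor
        · intro hy
          exact joined_map_aux f hy
        · intro hy
          exact jback x y hy
      rw [heq]
      exact (IsOpen.pathComponent (f x)).preimage f.continuous
    letI : TopologicalSpace (ZerothHomotopy X) :=
      @instTopologicalSpaceQuotient X (pathSetoid X) _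
    refine discreteTopology_iff_isOpen_singleton.mpr ?_
    rintro ⟨x⟩
    apply isOpen_coinduced.mpr
    have hset : Quot.mk (⇑(pathSetoid X)) ⁻¹' ({Quot.mk (⇑(pathSetoid X)) x} :
        Set (ZerothHomotopy X)) = pathComponent x := by
      ext y
      show Quot.mk (⇑(pathSetoid X)) y = Quot.mk (⇑(pathSetoid X)) x ↔ y ∈ pathComponent x
      constructor
      · intro h
        exact Joined.symm (Quotient.exact (s := pathSetoid X) h)
      · intro h
        exact Quot.sound (Joined.symm h)
    show IsOpen (Quot.mk (⇑(pathSetoid X)) ⁻¹' ({Quot.mk (⇑(pathSetoid X)) x} :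
      Set (ZerothHomotopy X)))
    rw [hset]
    exact hopen x
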